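/- arXiv:1904.01747 — 5 statements merged into one kernel-verified Lean document; each statement's English description precedes it below -/
import Mathlib

section
/- The function f(w,D) defined on ℝ^d × (symmetric d×d matrices), given by f(w,D) = wᵀ D⁺ w if D is positive semidefinite and w is in the range of D, and f(w,D) = +∞ otherwise (where D⁺ denotes the Moore–Penrose pseudoinverse), is jointly convex in (w,D). -/
open Matrix

/-- The four Penrose conditions characterizing the Moore–Penrose pseudoinverse. -/
def IsMoorePenrose {d : ℕ} (D Dp : Matrix (Fin d) (Fin d) ℝ) : Prop :=
  D * Dp * D = D ∧ Dp * D * Dp = Dp ∧ (D * Dp)ᵀ = D * Dp ∧ (Dp * D)ᵀ = Dp * D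

open Classical in
/-- The function f(w, D) = wᵀ D⁺ w if D is PSD and w ∈ range(D), and +∞ otherwise. -/
noncomputable def fMP {d : ℕ} (pinv : Matrix (Fin d) (Fin d) ℝ → Matrix (Fin d) (Fin d) ℝ)
    (w : Fin d → ℝ) (D : Matrix (Fin d) (Fin d) ℝ) : EReal :=
  if D.PosSemidef ∧ w ∈ Set.range D.mulVec then ((w ⬝ᵥ (pinv D).mulVec w : ℝ) : EReal) else ⊤

section Aux

variable {d : ℕ}

lemma psd_smul {M : Matrix (Fin d) (Fin d) ℝ} {c : ℝ} (hc : 0 ≤ c) (hM : M.PosSemidef) :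
    (c • M).PosSemidef := by
  refine PosSemidef.of_dotProduct_mulVec_nonneg ?_ (fun x => ?_)
  · show (c • M)ᴴ = c • M
    rw [conjTranspose_smul, hM.1.eq, star_trivial]
  · rw [smul_mulVec, dotProduct_smul, smul_eq_mul]
    exact mul_nonneg hc (hM.dotProduct_mulVec_nonneg x)

lemma real_conjTranspose_eq_transpose (M : Matrix (Fin d) (Fin d) ℝ) : Mᴴ = Mᵀ := by
  ext i j; simp [conjTranspose_apply]

/-- For a symmetric `D` with Moore–Penrose pseudoinverse `Dp`, if `w ∈ range D` then
`D (Dp w) = w`. -/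
lemma mp_range_fixed {D Dp : Matrix (Fin d) (Fin d) ℝ} (hMP : IsMoorePenrose D Dp)
    {w : Fin d → ℝ} (hw : w ∈ Set.range D.mulVec) : D *ᵥ (Dp *ᵥ w) = w := by
  obtain ⟨x, rfl⟩ := hw
  rw [mulVec_mulVec, mulVec_mulVec, hMP.1]

/-- Key upper bound: for PSD `D` and `w ∈ range D`, `2⟨y,w⟩ - ⟨y, Dy⟩ ≤ ⟨w, Dp w⟩`. -/
lemma key_ub {D Dp : Matrix (Fin d) (Fin d) ℝ} (hD : D.PosSemidef)
    (hMP : IsMoorePenrose D Dp) {w : Fin d → ℝ} (hw : w ∈ Set.range D.mulVec)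
    (y : Fin d → ℝ) :
    2 * (y ⬝ᵥ w) - y ⬝ᵥ (D *ᵥ y) ≤ w ⬝ᵥ (Dp *ᵥ w) := by
  set u := Dp *ᵥ w with hu
  have hDu : D *ᵥ u = w := mp_range_fixed hMP hw
  have hDsymm : Dᵀ = D := by rw [← real_conjTranspose_eq_transpose, hD.1.eq]
  have h0 : 0 ≤ (y - u) ⬝ᵥ (D *ᵥ (y - u)) := by simpa using hD.dotProduct_mulVec_nonneg (y - u)
  have huDy : u ⬝ᵥ (D *ᵥ y) = w ⬝ᵥ y := by
    rw [dotProduct_mulVec, ← hDsymm, ← mulVec_transpose, transpose_transpose, hDu]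
  have hyDu : y ⬝ᵥ (D *ᵥ u) = y ⬝ᵥ w := by rw [hDu]
  have huDu : u ⬝ᵥ (D *ᵥ u) = w ⬝ᵥ (Dp *ᵥ w) := by
    rw [hDu, hu, dotProduct_comm]
  have hexp : (y - u) ⬝ᵥ (D *ᵥ (y - u)) =
      y ⬝ᵥ (D *ᵥ y) - 2 * (y ⬝ᵥ w) + w ⬝ᵥ (Dp *ᵥ w) := by
    rw [mulVec_sub, sub_dotProduct, dotProduct_sub, dotProduct_sub, huDy, hyDu, huDu,
      dotProduct_comm w y]
    ring
  nlinarith [h0, hexp]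


/-- A matrix whose action on every vector is zero is zero. -/
lemma eq_zero_of_mulVec_eq_zero {M : Matrix (Fin d) (Fin d) ℝ}
    (h : ∀ v, M *ᵥ v = 0) : M = 0 := by
  ext i j
  have := congrFun (h (Pi.single j 1)) i
  simpa using this

open scoped MatrixOrder in
/-- Range lemma: a convex combination of PSD matrices fixes the combined vector through
`D * P`. -/
lemma range_combo {a b : ℝ} (ha : 0 < a) (hb : 0 < b)
    {D₁ D₂ : Matrix (Fin d) (Fin d) ℝ} (h₁ : D₁.PosSemidef) (h₂ : D₂.PosSemidef)
    {P : Matrix (Fin d) (Fin d) ℝ} (hMP : IsMoorePenrose (a • D₁ + b • D₂) P)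
    {w₁ w₂ : Fin d → ℝ} (hw₁ : w₁ ∈ Set.range D₁.mulVec) (hw₂ : w₂ ∈ Set.range D₂.mulVec) :
    a • w₁ + b • w₂ ∈ Set.range (a • D₁ + b • D₂).mulVec := by
  set D : Matrix (Fin d) (Fin d) ℝ := a • D₁ + b • D₂ with hD
  have hDpsd : D.PosSemidef := (psd_smul ha.le h₁).add (psd_smul hb.le h₂)
  have hDsymm : Dᵀ = D := by rw [← real_conjTranspose_eq_transpose, hDpsd.1.eq]
  set Q : Matrix (Fin d) (Fin d) ℝ := 1 - D * P with hQ
  have hQsymm : Qᵀ = Q := by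
    rw [hQ, transpose_sub, transpose_one, hMP.2.2.1]
  have hQD : Q * D = 0 := by
    rw [hQ, sub_mul, one_mul, Matrix.mul_assoc, ← Matrix.mul_assoc, hMP.1, sub_self]
  have hDQ : D * Q = 0 := by
    have := congrArg transpose hQD
    rwa [transpose_mul, hQsymm, hDsymm, transpose_zero] at this
  have hQDQ : a • (Q * D₁ * Q) + b • (Q * D₂ * Q) = 0 := by
    have : Q * D * Q = 0 := by rw [Matrix.mul_assoc, hDQ, Matrix.mul_zero]
    calc a • (Q * D₁ * Q) + b • (Q * D₂ * Q) = Q * D * Q := by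
          rw [hD]; simp only [Matrix.add_mul, Matrix.mul_add, Matrix.mul_smul, Matrix.smul_mul]
      _ = 0 := this
  -- each Q * Dᵢ * Q is PSD, and their positive combination is 0, so each is 0
  have key : ∀ (D' : Matrix (Fin d) (Fin d) ℝ), D'.PosSemidef →
      (∀ v, v ⬝ᵥ ((Q * D' * Q) *ᵥ v) = 0) → Q * D' = 0 := by
    intro D' hD' hv
    have hS : CFC.sqrt D' * CFC.sqrt D' = D' := CFC.sqrt_mul_sqrt_self D' (nonneg_iff_posSemidef.mpr hD')
    set S := (nonneg_iff_posSemidef.mp (CFC.sqrt_nonneg D')).1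
    have hSsymm : (CFC.sqrt D')ᵀ = CFC.sqrt D' := by
      rw [← real_conjTranspose_eq_transpose, (nonneg_iff_posSemidef.mp (CFC.sqrt_nonneg D')).1.eq]
    have hSQ : CFC.sqrt D' * Q = 0 := by
      rw [← conjTranspose_mul_self_eq_zero (A := CFC.sqrt D' * Q)]
      have hexp : (CFC.sqrt D' * Q)ᴴ * (CFC.sqrt D' * Q) = Q * D' * Q := by
        rw [real_conjTranspose_eq_transpose, transpose_mul, hQsymm, hSsymm,
          Matrix.mul_assoc, ← Matrix.mul_assoc (CFC.sqrt D'), hS, ← Matrix.mul_assoc]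
      rw [hexp]
      apply _root_.eq_zero_of_mulVec_eq_zero
      intro v
      have hpsd : (Q * D' * Q).PosSemidef := by
        have := hD'.conjTranspose_mul_mul_same (B := Q)
        rwa [real_conjTranspose_eq_transpose, hQsymm] at this
      exact (hpsd.dotProduct_mulVec_zero_iff v).mp (by simpa using hv v)
    have hD'Q : D' * Q = 0 := by
      rw [← hS, Matrix.mul_assoc, hSQ, Matrix.mul_zero]
    have := congrArg transpose hD'Q
    rwa [transpose_mul, hQsymm, ← real_conjTranspose_eq_transpose D', hD'.1.eq,
      transpose_zero] at this
  have hq1 : ∀ v, 0 ≤ v ⬝ᵥ ((Q * D₁ * Q) *ᵥ v) := by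
    intro v
    have hpsd : (Q * D₁ * Q).PosSemidef := by
      have := h₁.conjTranspose_mul_mul_same (B := Q)
      rwa [real_conjTranspose_eq_transpose, hQsymm] at this
    simpa using hpsd.dotProduct_mulVec_nonneg v
  have hq2 : ∀ v, 0 ≤ v ⬝ᵥ ((Q * D₂ * Q) *ᵥ v) := by
    intro v
    have hpsd : (Q * D₂ * Q).PosSemidef := by
      have := h₂.conjTranspose_mul_mul_same (B := Q)
      rwa [real_conjTranspose_eq_transpose, hQsymm] at this
    simpa using hpsd.dotProduct_mulVec_nonneg v
  have hzero : ∀ v, a * (v ⬝ᵥ ((Q * D₁ * Q) *ᵥ v)) + b * (v ⬝ᵥ ((Q * D₂ * Q) *ᵥ v)) = 0 := by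
    intro v
    have := congrArg (fun M => v ⬝ᵥ (M *ᵥ v)) hQDQ
    simpa [add_mulVec, smul_mulVec, dotProduct_smul, smul_eq_mul] using this
  have hQD₁ : Q * D₁ = 0 := by
    apply key D₁ h₁
    intro v
    have h0 := hzero v
    nlinarith [hq1 v, hq2 v, mul_nonneg ha.le (hq1 v), mul_nonneg hb.le (hq2 v)]
  have hQD₂ : Q * D₂ = 0 := by
    apply key D₂ h₂
    intro v
    have h0 := hzero v
    nlinarith [hq1 v, hq2 v, mul_nonneg ha.le (hq1 v), mul_nonneg hb.le (hq2 v)]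
  obtain ⟨x₁, hx₁⟩ := hw₁
  obtain ⟨x₂, hx₂⟩ := hw₂
  have hQw : Q *ᵥ (a • w₁ + b • w₂) = 0 := by
    rw [← hx₁, ← hx₂]
    simp only [mulVec_add, mulVec_smul]
    rw [mulVec_mulVec, mulVec_mulVec, hQD₁, hQD₂]
    simp
  refine ⟨P *ᵥ (a • w₁ + b • w₂), ?_⟩
  have : (1 - D * P) *ᵥ (a • w₁ + b • w₂) = 0 := hQw
  rw [sub_mulVec, one_mulVec, sub_eq_zero] at this
  rw [mulVec_mulVec, ← this]

end Aux

/-- the function f(w, D) is jointly convex on ℝ^d × (symmetric matrices). -/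
theorem fMP_jointly_convex {d : ℕ}
    (pinv : Matrix (Fin d) (Fin d) ℝ → Matrix (Fin d) (Fin d) ℝ)
    (hpinv : ∀ D, IsMoorePenrose D (pinv D))
    (w₁ w₂ : Fin d → ℝ) (D₁ D₂ : Matrix (Fin d) (Fin d) ℝ)
    (hD₁ : D₁ᵀ = D₁) (hD₂ : D₂ᵀ = D₂)
    (a b : ℝ) (ha : 0 ≤ a) (hb : 0 ≤ b) (hab : a + b = 1) :
    fMP pinv (a • w₁ + b • w₂) (a • D₁ + b • D₂) ≤
      (a : EReal) * fMP pinv w₁ D₁ + (b : EReal) * fMP pinv w₂ D₂ := by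
  rcases eq_or_lt_of_le ha with ha0 | ha'
  · -- a = 0, b = 1
    have hb1 : b = 1 := by linarith
    subst hb1
    rw [← ha0]
    simp [zero_smul, one_smul, zero_add, EReal.coe_zero, EReal.coe_one]
  rcases eq_or_lt_of_le hb with hb0 | hb'
  · -- b = 0, a = 1
    have ha1 : a = 1 := by linarith
    subst ha1
    rw [← hb0]
    simp [zero_smul, one_smul, add_zero, EReal.coe_zero, EReal.coe_one]
  have hne2 : fMP pinv w₂ D₂ ≠ ⊥ := by
    rw [fMP]; split_ifs
    · exact EReal.coe_ne_bot _
    · exact top_ne_bot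
  have hne1 : fMP pinv w₁ D₁ ≠ ⊥ := by
    rw [fMP]; split_ifs
    · exact EReal.coe_ne_bot _
    · exact top_ne_bot
  have hmulne : ∀ (c : ℝ), 0 < c → ∀ (x : EReal), x ≠ ⊥ → (c : EReal) * x ≠ ⊥ := by
    intro c hc x hx
    induction x using EReal.rec with
    | bot => exact absurd rfl hx
    | coe r => rw [← EReal.coe_mul]; exact EReal.coe_ne_bot _
    | top => rw [EReal.coe_mul_top_of_pos hc]; exact top_ne_bot
  by_cases h₁ : D₁.PosSemidef ∧ w₁ ∈ Set.range D₁.mulVec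
  swap
  · have hf1 : fMP pinv w₁ D₁ = ⊤ := by rw [fMP, if_neg h₁]
    rw [hf1, EReal.coe_mul_top_of_pos ha',
      EReal.top_add_of_ne_bot (hmulne b hb' _ hne2)]
    exact le_top
  by_cases h₂ : D₂.PosSemidef ∧ w₂ ∈ Set.range D₂.mulVec
  swap
  · have hf2 : fMP pinv w₂ D₂ = ⊤ := by rw [fMP, if_neg h₂]
    rw [hf2, EReal.coe_mul_top_of_pos hb', EReal.add_top_of_ne_bot (hmulne a ha' _ hne1)]
    exact le_top
  obtain ⟨hP1, hr1⟩ := h₁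
  obtain ⟨hP2, hr2⟩ := h₂
  have hDpsd : (a • D₁ + b • D₂).PosSemidef := (psd_smul ha hP1).add (psd_smul hb hP2)
  have hrange : a • w₁ + b • w₂ ∈ Set.range (a • D₁ + b • D₂).mulVec :=
    range_combo ha' hb' hP1 hP2 (hpinv _) hr1 hr2
  rw [fMP, fMP, fMP, if_pos ⟨hDpsd, hrange⟩, if_pos ⟨hP1, hr1⟩, if_pos ⟨hP2, hr2⟩,
    ← EReal.coe_mul, ← EReal.coe_mul, ← EReal.coe_add, EReal.coe_le_coe_iff]
  set w : Fin d → ℝ := a • w₁ + b • w₂ with hw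
  set y : Fin d → ℝ := pinv (a • D₁ + b • D₂) *ᵥ w with hy
  have hfix : (a • D₁ + b • D₂) *ᵥ y = w := mp_range_fixed (hpinv _) hrange
  have hub1 : 2 * (y ⬝ᵥ w₁) - y ⬝ᵥ (D₁ *ᵥ y) ≤ w₁ ⬝ᵥ (pinv D₁ *ᵥ w₁) :=
    key_ub hP1 (hpinv D₁) hr1 y
  have hub2 : 2 * (y ⬝ᵥ w₂) - y ⬝ᵥ (D₂ *ᵥ y) ≤ w₂ ⬝ᵥ (pinv D₂ *ᵥ w₂) :=
    key_ub hP2 (hpinv D₂) hr2 y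
  have heq : w ⬝ᵥ (pinv (a • D₁ + b • D₂) *ᵥ w) = y ⬝ᵥ w := by
    rw [← hy, dotProduct_comm]
  have hDy : y ⬝ᵥ ((a • D₁ + b • D₂) *ᵥ y) = y ⬝ᵥ w := by rw [hfix]
  have hDyexp : y ⬝ᵥ ((a • D₁ + b • D₂) *ᵥ y)
      = a * (y ⬝ᵥ (D₁ *ᵥ y)) + b * (y ⬝ᵥ (D₂ *ᵥ y)) := by
    simp [add_mulVec, smul_mulVec, dotProduct_add, dotProduct_smul, smul_eq_mul]
  have hwexp : y ⬝ᵥ w = a * (y ⬝ᵥ w₁) + b * (y ⬝ᵥ w₂) := by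
    rw [hw]
    simp [dotProduct_add, dotProduct_smul, smul_eq_mul]
  rw [heq]
  nlinarith [mul_le_mul_of_nonneg_left hub1 ha, mul_le_mul_of_nonneg_left hub2 hb]
end

section
/- For any matrix W ∈ ℝ^{d×T} with W ≠ 0, the matrix D̂ = (WWᵀ)^{1/2} / trace((WWᵀ)^{1/2}) minimizes ∑_{t=1}^T ⟨w_t, D⁺ w_t⟩ over all positive semidefinite symmetric matrices D with trace(D) ≤ 1 and range(W) ⊆ range(D), and the minimum value equals (trace((WWᵀ)^{1/2}))² = ‖W‖_{tr}², the square of the trace (nuclear) norm of W. -/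
open Matrix

/-- The objective ∑ₜ ⟨wₜ, D⁺ wₜ⟩, where wₜ are the columns of W and D⁺ = pinv D. -/
noncomputable def mtObj {d T : ℕ} (pinv : Matrix (Fin d) (Fin d) ℝ → Matrix (Fin d) (Fin d) ℝ)
    (W : Matrix (Fin d) (Fin T) ℝ) (D : Matrix (Fin d) (Fin d) ℝ) : ℝ :=
  ∑ t, (Wᵀ t) ⬝ᵥ (pinv D).mulVec (Wᵀ t)

/-- The square root of a positive semidefinite matrix, as defined in the older Mathlib
(`Matrix.PosSemidef.sqrt`, since removed). -/
noncomputable def Matrix.PosSemidef.sqrt {n : Type*} [Fintype n] [DecidableEq n] {𝕜 : Type*}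
    [RCLike 𝕜] [PartialOrder 𝕜] {A : Matrix n n 𝕜} (hA : A.PosSemidef) : Matrix n n 𝕜 :=
  hA.1.eigenvectorUnitary.1 * diagonal ((↑) ∘ (√·) ∘ hA.1.eigenvalues) *
    (star hA.1.eigenvectorUnitary : Matrix n n 𝕜)

namespace TNVaux

variable {d T m n : ℕ}

lemma mp_unique {D X Y : Matrix (Fin d) (Fin d) ℝ}
    (hX : IsMoorePenrose D X) (hY : IsMoorePenrose D Y) : X = Y := by
  obtain ⟨hX1, hX2, hX3, hX4⟩ := hX
  obtain ⟨hY1, hY2, hY3, hY4⟩ := hY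
  have e1 : (D * Y) * (D * X) = D * X := by rw [← mul_assoc, hY1]
  have e3 : (D * X) * (D * Y) = D * Y := by rw [← mul_assoc, hX1]
  have hDXY : D * X = D * Y := by
    calc D * X = (D * Y) * (D * X) := e1.symm
      _ = (D * Y)ᵀ * (D * X)ᵀ := by rw [hY3, hX3]
      _ = ((D * X) * (D * Y))ᵀ := by rw [← transpose_mul]
      _ = (D * Y)ᵀ := by rw [e3]
      _ = D * Y := hY3
  have e1' : (X * D) * (Y * D) = X * D := by
    rw [mul_assoc, ← mul_assoc D Y D, hY1]
  have e3' : (Y * D) * (X * D) = Y * D := by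
    rw [mul_assoc, ← mul_assoc D X D, hX1]
  have hXYD : X * D = Y * D := by
    calc X * D = (X * D) * (Y * D) := e1'.symm
      _ = (X * D)ᵀ * (Y * D)ᵀ := by rw [hX4, hY4]
      _ = ((Y * D) * (X * D))ᵀ := by rw [← transpose_mul]
      _ = (Y * D)ᵀ := by rw [e3']
      _ = Y * D := hY4
  calc X = X * D * X := hX2.symm
    _ = Y * D * X := by rw [hXYD]
    _ = Y * (D * X) := by rw [mul_assoc]
    _ = Y * (D * Y) := by rw [hDXY]
    _ = Y * D * Y := by rw [mul_assoc]
    _ = Y := hY2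

lemma mp_transpose {D X : Matrix (Fin d) (Fin d) ℝ} (hD : Dᵀ = D)
    (h : IsMoorePenrose D X) : IsMoorePenrose D Xᵀ := by
  obtain ⟨h1, h2, h3, h4⟩ := h
  have hDX : D * Xᵀ = X * D := by
    calc D * Xᵀ = Dᵀ * Xᵀ := by rw [hD]
      _ = (X * D)ᵀ := by rw [transpose_mul]
      _ = X * D := h4
  have hXD : Xᵀ * D = D * X := by
    calc Xᵀ * D = Xᵀ * Dᵀ := by rw [hD]
      _ = (D * X)ᵀ := by rw [transpose_mul]
      _ = D * X := h3
  refine ⟨?_, ?_, ?_, ?_⟩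
  · have := congrArg Matrix.transpose h1
    rw [transpose_mul, transpose_mul, hD, ← mul_assoc] at this
    exact this
  · have := congrArg Matrix.transpose h2
    rw [transpose_mul, transpose_mul, hD, ← mul_assoc] at this
    exact this
  · rw [hDX]; exact h4
  · rw [hXD]; exact h3

lemma mp_smul {D X : Matrix (Fin d) (Fin d) ℝ} {c : ℝ} (hc : c ≠ 0)
    (h : IsMoorePenrose D X) : IsMoorePenrose (c • D) (c⁻¹ • X) := by
  obtain ⟨h1, h2, h3, h4⟩ := h
  refine ⟨?_, ?_, ?_, ?_⟩ <;>
    simp [Matrix.smul_mul, Matrix.mul_smul, smul_smul, transpose_smul, h1, h2, h3, h4,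
      mul_inv_cancel₀ hc, inv_mul_cancel₀ hc, mul_assoc]

lemma herm_transpose {A : Matrix (Fin d) (Fin d) ℝ} (h : A.IsHermitian) : Aᵀ = A := by
  rw [← conjTranspose_eq_transpose_of_trivial]; exact h

lemma ext_mulVec {A B : Matrix (Fin m) (Fin n) ℝ}
    (h : ∀ v, A.mulVec v = B.mulVec v) : A = B := by
  ext i j
  have := congrFun (h (Pi.single j 1)) i
  simpa using this

lemma trace_transpose_mul (A B : Matrix (Fin m) (Fin n) ℝ) :
    (Aᵀ * B).trace = ∑ p : Fin n × Fin m, A p.2 p.1 * B p.2 p.1 := by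
  rw [Matrix.trace, Fintype.sum_prod_type]
  simp only [Matrix.diag, Matrix.mul_apply, Matrix.transpose_apply]

lemma cs (A B : Matrix (Fin m) (Fin n) ℝ) :
    (Aᵀ * B).trace ^ 2 ≤ (Aᵀ * A).trace * (Bᵀ * B).trace := by
  rw [trace_transpose_mul, trace_transpose_mul, trace_transpose_mul]
  have := Finset.sum_mul_sq_le_sq_mul_sq Finset.univ
    (fun p : Fin n × Fin m => A p.2 p.1) (fun p => B p.2 p.1)
  simpa [pow_two] using this

lemma trace_transpose_mul_self_nonneg (A : Matrix (Fin m) (Fin n) ℝ) :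
    0 ≤ (Aᵀ * A).trace := by
  rw [trace_transpose_mul]
  exact Finset.sum_nonneg fun p _ => mul_self_nonneg _

lemma eq_zero_of_trace_transpose_mul_self {A : Matrix (Fin m) (Fin n) ℝ}
    (h : (Aᵀ * A).trace = 0) : A = 0 := by
  rw [trace_transpose_mul] at h
  ext i j
  have := (Finset.sum_eq_zero_iff_of_nonneg
    (fun p _ => mul_self_nonneg (A p.2 p.1))).mp h (j, i) (Finset.mem_univ _)
  simpa [mul_self_eq_zero] using this

lemma eq_zero_of_mul_transpose {A : Matrix (Fin m) (Fin n) ℝ} (h : A * Aᵀ = 0) : A = 0 := by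
  have h' : A * Aᴴ = 0 := by rwa [conjTranspose_eq_transpose_of_trivial]
  exact Matrix.self_mul_conjTranspose_eq_zero.mp h'

lemma proj_sub_zero (W : Matrix (Fin d) (Fin T) ℝ) (Q : Matrix (Fin d) (Fin d) ℝ)
    (hQt : Qᵀ = Q) (hQP : Q * (W * Wᵀ) = W * Wᵀ) (hPQ : (W * Wᵀ) * Q = W * Wᵀ) :
    Q * W = W := by
  have e2 : Q * W * Wᵀ = W * Wᵀ := by rw [Matrix.mul_assoc]; exact hQP
  have key : (W - Q * W) * (W - Q * W)ᵀ = 0 := by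
    simp only [transpose_sub, transpose_mul, hQt, Matrix.sub_mul, Matrix.mul_sub,
      ← Matrix.mul_assoc]
    rw [e2, hPQ]
    simp
  exact (sub_eq_zero.mp (eq_zero_of_mul_transpose key)).symm

lemma mtObj_eq_trace (pinv : Matrix (Fin d) (Fin d) ℝ → Matrix (Fin d) (Fin d) ℝ)
    (W : Matrix (Fin d) (Fin T) ℝ) (D : Matrix (Fin d) (Fin d) ℝ) :
    mtObj pinv W D = ((pinv D) * (W * Wᵀ)).trace := by
  have h1 : mtObj pinv W D = (Wᵀ * ((pinv D) * W)).trace := by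
    simp only [mtObj, Matrix.trace, Matrix.diag, Matrix.mul_apply, Matrix.transpose_apply,
      Matrix.mulVec, dotProduct]
  rw [h1, Matrix.trace_mul_comm, Matrix.mul_assoc]

lemma psd_sqrt_mul_self {d : ℕ} {A : Matrix (Fin d) (Fin d) ℝ} (hA : A.PosSemidef) :
    hA.sqrt * hA.sqrt = A := by
  have hU : (star hA.1.eigenvectorUnitary : Matrix (Fin d) (Fin d) ℝ) *
      hA.1.eigenvectorUnitary.1 = 1 := Unitary.coe_star_mul_self _
  conv_rhs => rw [hA.1.spectral_theorem]
  simp only [Matrix.PosSemidef.sqrt, Unitary.conjStarAlgAut_apply]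
  rw [show ∀ a b c e f g : Matrix (Fin d) (Fin d) ℝ, a * b * c * (e * f * g)
      = a * b * (c * e) * f * g by intros; simp only [Matrix.mul_assoc], hU, Matrix.mul_one,
    Matrix.mul_assoc _ (diagonal _) (diagonal _), diagonal_mul_diagonal]
  congr 3
  funext i
  simp [Real.mul_self_sqrt (hA.eigenvalues_nonneg i)]

lemma psd_posSemidef_sqrt {d : ℕ} {A : Matrix (Fin d) (Fin d) ℝ} (hA : A.PosSemidef) :
    hA.sqrt.PosSemidef := by
  have h : (diagonal ((↑) ∘ (√·) ∘ hA.1.eigenvalues) : Matrix (Fin d) (Fin d) ℝ).PosSemidef :=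
    posSemidef_diagonal_iff.mpr fun i => by simp [Real.sqrt_nonneg]
  have := h.mul_mul_conjTranspose_same hA.1.eigenvectorUnitary.1
  exact this

end TNVaux

open TNVaux in
/-- D̂ = (WWᵀ)^{1/2}/trace((WWᵀ)^{1/2}) minimizes ∑ₜ ⟨wₜ, D⁺ wₜ⟩ over PSD
matrices with trace(D) ≤ 1 and range(W) ⊆ range(D); the minimum equals
(trace((WWᵀ)^{1/2}))², the squared trace norm of W. -/
theorem trace_norm_variational {d T : ℕ}
    (pinv : Matrix (Fin d) (Fin d) ℝ → Matrix (Fin d) (Fin d) ℝ)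
    (hpinv : ∀ D, IsMoorePenrose D (pinv D))
    (W : Matrix (Fin d) (Fin T) ℝ) (hW : W ≠ 0)
    (hP : (W * Wᵀ).PosSemidef)
    (Dhat : Matrix (Fin d) (Fin d) ℝ)
    (hDhat : Dhat = (hP.sqrt.trace)⁻¹ • hP.sqrt) :
    (Dhat.PosSemidef ∧ Dhat.trace ≤ 1 ∧
        ∀ v ∈ Set.range W.mulVec, v ∈ Set.range Dhat.mulVec) ∧
      (∀ D : Matrix (Fin d) (Fin d) ℝ, D.PosSemidef → D.trace ≤ 1 →
        (∀ v ∈ Set.range W.mulVec, v ∈ Set.range D.mulVec) →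
        mtObj pinv W Dhat ≤ mtObj pinv W D) ∧
      mtObj pinv W Dhat = hP.sqrt.trace ^ 2 := by
  set S : Matrix (Fin d) (Fin d) ℝ := hP.sqrt with hSdef
  set c : ℝ := S.trace with hcdef
  have hSS : S * S = W * Wᵀ := psd_sqrt_mul_self hP
  have hSpsd : S.PosSemidef := psd_posSemidef_sqrt hP
  have hSsym : Sᵀ = S := herm_transpose hSpsd.isHermitian
  obtain ⟨p1, p2, p3, p4⟩ := hpinv S
  set Sp : Matrix (Fin d) (Fin d) ℝ := pinv S with hSpdef
  have hSpsym : Spᵀ = Sp :=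
    (mp_unique (hpinv S) (mp_transpose hSsym (hpinv S))).symm
  have hcomm : S * Sp = Sp * S := by
    calc S * Sp = (S * Sp)ᵀ := p3.symm
      _ = Spᵀ * Sᵀ := by rw [transpose_mul]
      _ = Sp * S := by rw [hSpsym, hSsym]
  have hSQ : S * (S * Sp) = S := by rw [hcomm, ← Matrix.mul_assoc]; exact p1
  -- positivity of the trace
  have hSne : S ≠ 0 := by
    intro h0
    apply hW
    have hP0 : W * Wᵀ = 0 := by rw [← hSS, h0, Matrix.mul_zero]
    exact eq_zero_of_mul_transpose hP0
  have hRS := psd_posSemidef_sqrt hSpsd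
  have hRSsym : hSpsd.sqrtᵀ = hSpsd.sqrt := herm_transpose hRS.isHermitian
  have htrS : c = (hSpsd.sqrtᵀ * hSpsd.sqrt).trace := by
    rw [hRSsym, psd_sqrt_mul_self hSpsd]
  have hc0 : 0 ≤ c := htrS ▸ trace_transpose_mul_self_nonneg _
  have hcne : c ≠ 0 := by
    intro h0
    apply hSne
    have hz : hSpsd.sqrt = 0 := eq_zero_of_trace_transpose_mul_self (by rw [← htrS, h0])
    rw [← psd_sqrt_mul_self hSpsd, hz, Matrix.mul_zero]
  have hc : 0 < c := lt_of_le_of_ne hc0 (Ne.symm hcne)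
  -- projection identities for S
  have hQP : (S * Sp) * (W * Wᵀ) = W * Wᵀ := by
    rw [← hSS, ← Matrix.mul_assoc, p1]
  have hPQ : (W * Wᵀ) * (S * Sp) = W * Wᵀ := by
    rw [← hSS, Matrix.mul_assoc, hSQ]
  have hQW : (S * Sp) * W = W := proj_sub_zero W (S * Sp) p3 hQP hPQ
  -- pinv of Dhat
  have hpinvDhat : pinv Dhat = c • Sp := by
    have h1 : IsMoorePenrose Dhat (c • Sp) := by
      rw [hDhat]
      have := mp_smul (inv_ne_zero hcne) (hpinv S)
      rwa [inv_inv] at this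
    exact mp_unique (hpinv Dhat) h1
  -- value at Dhat
  have hSpSS : Sp * (S * S) = S := by
    rw [← Matrix.mul_assoc, ← hcomm]; exact p1
  have hval : mtObj pinv W Dhat = c ^ 2 := by
    rw [mtObj_eq_trace, hpinvDhat, Matrix.smul_mul, ← hSS, hSpSS, Matrix.trace_smul,
      smul_eq_mul, ← hcdef, pow_two]
  refine ⟨⟨?_, ?_, ?_⟩, ?_, hval⟩
  · -- PSD
    rw [hDhat]
    refine PosSemidef.of_dotProduct_mulVec_nonneg ?_ ?_
    · show ((c⁻¹ • S)ᴴ = c⁻¹ • S)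
      rw [conjTranspose_smul, hSpsd.isHermitian.eq]
      simp
    · intro x
      have h0 := hSpsd.dotProduct_mulVec_nonneg x
      rw [Matrix.smul_mulVec, dotProduct_smul, smul_eq_mul]
      exact mul_nonneg (inv_nonneg.mpr hc0) h0
  · -- trace ≤ 1
    rw [hDhat, Matrix.trace_smul, smul_eq_mul, ← hcdef, inv_mul_cancel₀ hcne]
  · -- range
    rintro v ⟨x, rfl⟩
    refine ⟨c • ((Sp * W).mulVec x), ?_⟩
    rw [hDhat, Matrix.smul_mulVec, Matrix.mulVec_smul, Matrix.mulVec_mulVec,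
      smul_smul, inv_mul_cancel₀ hcne, one_smul, ← Matrix.mul_assoc, hQW]
  · -- optimality
    intro D hD hDtr hrange
    obtain ⟨q1, q2, q3, q4⟩ := hpinv D
    set Dp : Matrix (Fin d) (Fin d) ℝ := pinv D with hDpdef
    have hDsym : Dᵀ = D := herm_transpose hD.isHermitian
    have hDpsym : Dpᵀ = Dp :=
      (mp_unique (hpinv D) (mp_transpose hDsym (hpinv D))).symm
    set R : Matrix (Fin d) (Fin d) ℝ := hD.sqrt with hRdef
    have hRR : R * R = D := psd_sqrt_mul_self hD
    have hRsym : Rᵀ = R := herm_transpose (psd_posSemidef_sqrt hD).isHermitian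
    -- projection of range D onto W Wᵀ
    have hQP' : (D * Dp) * (W * Wᵀ) = W * Wᵀ := by
      apply ext_mulVec
      intro v
      obtain ⟨u, hu⟩ := hrange ((W * Wᵀ).mulVec v) ⟨Wᵀ.mulVec v, Matrix.mulVec_mulVec _ _ _⟩
      calc ((D * Dp) * (W * Wᵀ)).mulVec v
          = (D * Dp).mulVec ((W * Wᵀ).mulVec v) := (Matrix.mulVec_mulVec _ _ _).symm
        _ = (D * Dp).mulVec (D.mulVec u) := by rw [hu]
        _ = ((D * Dp) * D).mulVec u := Matrix.mulVec_mulVec _ _ _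
        _ = D.mulVec u := by rw [q1]
        _ = (W * Wᵀ).mulVec v := hu
    have hWWt : (W * Wᵀ)ᵀ = W * Wᵀ := by rw [transpose_mul, transpose_transpose]
    have hPQ' : (W * Wᵀ) * (D * Dp) = W * Wᵀ := by
      have := congrArg Matrix.transpose hQP'
      rwa [transpose_mul, q3, hWWt] at this
    have hSSt : S * Sᵀ = W * Wᵀ := by rw [hSsym, hSS]
    have hQDS : (D * Dp) * S = S :=
      proj_sub_zero S (D * Dp) q3 (by rw [hSSt]; exact hQP') (by rw [hSSt]; exact hPQ')
    -- Cauchy-Schwarz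
    have hRtB : Rᵀ * (R * Dp * S) = S := by
      rw [hRsym, ← Matrix.mul_assoc, ← Matrix.mul_assoc, hRR]
      exact hQDS
    have hRtR : (Rᵀ * R).trace = D.trace := by rw [hRsym, hRR]
    have expand : (R * Dp * S)ᵀ * (R * Dp * S) = S * Dp * S := by
      calc (R * Dp * S)ᵀ * (R * Dp * S)
          = (S * Dp * R) * (R * Dp * S) := by
            rw [transpose_mul, transpose_mul, hSsym, hDpsym, hRsym, ← Matrix.mul_assoc S Dp R]
        _ = (S * Dp) * (R * ((R * Dp) * S)) := by
            rw [Matrix.mul_assoc (S * Dp) R ((R * Dp) * S)]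
        _ = (S * Dp) * S := by
            rw [← Matrix.mul_assoc R (R * Dp) S, ← Matrix.mul_assoc R R Dp, hRR, hQDS]
        _ = S * Dp * S := rfl
    have hBtB : ((R * Dp * S)ᵀ * (R * Dp * S)).trace = mtObj pinv W D := by
      rw [expand, mtObj_eq_trace, Matrix.trace_mul_comm (S * Dp) S, ← Matrix.mul_assoc,
        Matrix.trace_mul_comm (S * S) Dp, hSS]
    have hnn : 0 ≤ ((R * Dp * S)ᵀ * (R * Dp * S)).trace :=
      trace_transpose_mul_self_nonneg _
    have hcs := cs R (R * Dp * S)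
    rw [hRtB, hRtR, hBtB] at hcs
    rw [hval]
    calc c ^ 2 ≤ D.trace * mtObj pinv W D := hcs
      _ ≤ 1 * mtObj pinv W D := by
          apply mul_le_mul_of_nonneg_right hDtr
          rw [← hBtB]; exact hnn
      _ = mtObj pinv W D := one_mul _
end

section
/- For any d×T real matrix A with rows a^1,...,a^d, and any orthogonal d×d matrix U, letting W = UA, the matrix D = U · Diag(‖a^i‖₂ / ‖A‖_{2,1})_{i=1}^d · Uᵀ (where ‖A‖_{2,1} = ∑_{i=1}^d ‖a^i‖₂ > 0) is positive semidefinite with trace(D) = 1, range(W) ⊆ range(D), and ∑_{t=1}^T ⟨w_t, D⁺ w_t⟩ = ‖A‖_{2,1}². -/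
open Matrix

/-- The L2,1-norm of a matrix: the sum of the Euclidean norms of its rows. -/
noncomputable def l21 {d T : ℕ} (A : Matrix (Fin d) (Fin T) ℝ) : ℝ :=
  ∑ i, Real.sqrt (∑ t, A i t ^ 2)

/-- Uniqueness of the Moore–Penrose pseudoinverse. -/
lemma mp_unique {d : ℕ} {D P Q : Matrix (Fin d) (Fin d) ℝ}
    (hP : IsMoorePenrose D P) (hQ : IsMoorePenrose D Q) : P = Q := by
  obtain ⟨hP1, hP2, hP3, hP4⟩ := hP
  obtain ⟨hQ1, hQ2, hQ3, hQ4⟩ := hQ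
  have hPD : P = P * Pᵀ * Dᵀ := by
    conv_lhs => rw [← hP2, Matrix.mul_assoc, ← hP3, Matrix.transpose_mul,
      ← Matrix.mul_assoc]
  have hDt : Dᵀ = Dᵀ * (D * Q) := by
    conv_lhs => rw [← hQ1, Matrix.transpose_mul, hQ3]
  have key : P = P * D * Q := by
    calc P = P * Pᵀ * Dᵀ := hPD
    _ = P * Pᵀ * (Dᵀ * (D * Q)) := by rw [← hDt]
    _ = (P * Pᵀ * Dᵀ) * (D * Q) := by simp only [Matrix.mul_assoc]
    _ = P * (D * Q) := by rw [← hPD]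
    _ = P * D * Q := by rw [Matrix.mul_assoc]
  have hQD : Q = Dᵀ * Qᵀ * Q := by
    conv_lhs => rw [← hQ2, ← hQ4, Matrix.transpose_mul]
  have hDt2 : Dᵀ = P * D * Dᵀ := by
    conv_lhs => rw [← hP1, Matrix.mul_assoc, Matrix.transpose_mul, hP4]
  have key2 : Q = P * D * Q := by
    calc Q = Dᵀ * Qᵀ * Q := hQD
    _ = (P * D * Dᵀ) * Qᵀ * Q := by rw [← hDt2]
    _ = (P * D) * (Dᵀ * Qᵀ * Q) := by simp only [Matrix.mul_assoc]
    _ = (P * D) * Q := by rw [← hQD]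
    _ = P * D * Q := rfl
  rw [key2]; exact key

/-- for W = UA (U orthogonal) and D = U·Diag(‖aⁱ‖₂/‖A‖₂₁)·Uᵀ, the matrix D is
PSD with trace 1, range(W) ⊆ range(D), and ∑ₜ ⟨wₜ, D⁺ wₜ⟩ = ‖A‖₂₁². -/
theorem diag_construction {d T : ℕ} (A : Matrix (Fin d) (Fin T) ℝ) (hA : 0 < l21 A)
    (U : Matrix (Fin d) (Fin d) ℝ) (hU : Uᵀ * U = 1)
    (W : Matrix (Fin d) (Fin T) ℝ) (hW : W = U * A)
    (D : Matrix (Fin d) (Fin d) ℝ)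
    (hD : D = U * Matrix.diagonal (fun i => Real.sqrt (∑ t, A i t ^ 2) / l21 A) * Uᵀ)
    (Dp : Matrix (Fin d) (Fin d) ℝ) (hDp : IsMoorePenrose D Dp) :
    D.PosSemidef ∧ D.trace = 1 ∧
      (∀ v ∈ Set.range W.mulVec, v ∈ Set.range D.mulVec) ∧
      ∑ t, (Wᵀ t) ⬝ᵥ Dp.mulVec (Wᵀ t) = l21 A ^ 2 := by
  set s := l21 A with hs
  have hsne : s ≠ 0 := hA.ne'
  have hnn : ∀ i, (0:ℝ) ≤ ∑ t, A i t ^ 2 := fun i => Finset.sum_nonneg fun t _ => sq_nonneg _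
  have hc2 : ∀ i, Real.sqrt (∑ t, A i t ^ 2) ^ 2 = ∑ t, A i t ^ 2 :=
    fun i => Real.sq_sqrt (hnn i)
  have hczero : ∀ i, Real.sqrt (∑ t, A i t ^ 2) = 0 → ∀ t, A i t = 0 := by
    intro i hi t
    have h0 : ∑ t, A i t ^ 2 = 0 := by rw [← hc2 i, hi]; ring
    have := (Finset.sum_eq_zero_iff_of_nonneg (fun t _ => sq_nonneg (A i t))).mp h0 t
      (Finset.mem_univ t)
    exact pow_eq_zero_iff (n := 2) (by norm_num) |>.mp this
  have hUU : U * Uᵀ = 1 := mul_eq_one_comm.mp hU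
  set cp : Fin d → ℝ := fun i => if Real.sqrt (∑ t, A i t ^ 2) = 0 then 0
    else s / Real.sqrt (∑ t, A i t ^ 2) with hcp
  set e : Fin d → ℝ := fun i => if Real.sqrt (∑ t, A i t ^ 2) = 0 then 0 else 1 with he
  set E : Matrix (Fin d) (Fin d) ℝ := U * Matrix.diagonal cp * Uᵀ with hE
  have sandwich : ∀ f g : Fin d → ℝ,
      (U * Matrix.diagonal f * Uᵀ) * (U * Matrix.diagonal g * Uᵀ)
        = U * Matrix.diagonal (fun i => f i * g i) * Uᵀ := by
    intro f g
    calc (U * Matrix.diagonal f * Uᵀ) * (U * Matrix.diagonal g * Uᵀ)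
        = U * Matrix.diagonal f * (Uᵀ * U) * (Matrix.diagonal g * Uᵀ) := by
          simp only [Matrix.mul_assoc]
      _ = U * (Matrix.diagonal f * Matrix.diagonal g) * Uᵀ := by
          rw [hU, Matrix.mul_one]; simp only [Matrix.mul_assoc]
      _ = U * Matrix.diagonal (fun i => f i * g i) * Uᵀ := by
          rw [Matrix.diagonal_mul_diagonal]
  have hDE : D * E = U * Matrix.diagonal e * Uᵀ := by
    rw [hD, hE, sandwich]
    have hfun : (fun i => Real.sqrt (∑ t, A i t ^ 2) / s * cp i) = e := by
      funext i
      by_cases h : Real.sqrt (∑ t, A i t ^ 2) = 0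
      · simp [hcp, he, h]
      · simp only [hcp, he, h, if_false]
        field_simp
    rw [hfun]
  have hED : E * D = U * Matrix.diagonal e * Uᵀ := by
    rw [hD, hE, sandwich]
    have hfun : (fun i => cp i * (Real.sqrt (∑ t, A i t ^ 2) / s)) = e := by
      funext i
      by_cases h : Real.sqrt (∑ t, A i t ^ 2) = 0
      · simp [hcp, he, h]
      · simp only [hcp, he, h, if_false]
        field_simp
    rw [hfun]
  have hEMP : IsMoorePenrose D E := by
    refine ⟨?_, ?_, ?_, ?_⟩
    · rw [hDE]
      conv_lhs => rw [hD]
      rw [sandwich]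
      conv_rhs => rw [hD]
      have hfun : (fun i => e i * (Real.sqrt (∑ t, A i t ^ 2) / s))
          = fun i => Real.sqrt (∑ t, A i t ^ 2) / s := by
        funext i
        by_cases h : Real.sqrt (∑ t, A i t ^ 2) = 0 <;> simp [he, h]
      rw [hfun]
    · rw [hED]
      conv_lhs => rw [hE]
      rw [sandwich]
      conv_rhs => rw [hE]
      have hfun : (fun i => e i * cp i) = cp := by
        funext i
        by_cases h : Real.sqrt (∑ t, A i t ^ 2) = 0 <;> simp [he, hcp, h]
      rw [hfun]
    · rw [hDE]
      rw [Matrix.transpose_mul, Matrix.transpose_mul, Matrix.transpose_transpose,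
        Matrix.diagonal_transpose, Matrix.mul_assoc]
    · rw [hED]
      rw [Matrix.transpose_mul, Matrix.transpose_mul, Matrix.transpose_transpose,
        Matrix.diagonal_transpose, Matrix.mul_assoc]
  have hDpE : Dp = E := mp_unique hDp hEMP
  refine ⟨?_, ?_, ?_, ?_⟩
  · rw [hD]
    have hUH : Uᵀ = Uᴴ := rfl
    rw [hUH]
    exact (Matrix.posSemidef_diagonal_iff.mpr fun i =>
      div_nonneg (Real.sqrt_nonneg _) hA.le).mul_mul_conjTranspose_same U
  · rw [hD, Matrix.trace_mul_cycle, hU, Matrix.one_mul, Matrix.trace_diagonal,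
      ← Finset.sum_div]
    exact div_self hsne
  · rintro v ⟨x, hx⟩
    have h1 : Matrix.diagonal e * A = A := by
      ext i t
      rw [Matrix.diagonal_mul]
      by_cases h : Real.sqrt (∑ t, A i t ^ 2) = 0
      · simp [he, h, hczero i h t]
      · simp [he, h]
    have hDEW : D * E * W = W := by
      rw [hDE, hW]
      calc U * Matrix.diagonal e * Uᵀ * (U * A)
          = U * (Matrix.diagonal e * ((Uᵀ * U) * A)) := by simp only [Matrix.mul_assoc]
        _ = U * (Matrix.diagonal e * A) := by rw [hU, Matrix.one_mul]
        _ = U * A := by rw [h1]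
    refine ⟨E.mulVec (W.mulVec x), ?_⟩
    rw [Matrix.mulVec_mulVec, Matrix.mulVec_mulVec, hDEW, hx]
  · rw [hDpE]
    have hcol : ∀ t, Wᵀ t = U.mulVec (fun i => A i t) := by
      intro t
      funext i
      simp [hW, Matrix.mul_apply, Matrix.mulVec, dotProduct]
    have hEU : E * U = U * Matrix.diagonal cp := by
      calc E * U = U * Matrix.diagonal cp * (Uᵀ * U) := by
            rw [hE]; simp only [Matrix.mul_assoc]
        _ = U * Matrix.diagonal cp := by rw [hU, Matrix.mul_one]
    have hdot : ∀ a b : Fin d → ℝ, (U.mulVec a) ⬝ᵥ (U.mulVec b) = a ⬝ᵥ b := by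
      intro a b
      rw [Matrix.dotProduct_mulVec, ← Matrix.mulVec_transpose, Matrix.mulVec_mulVec,
        hU, Matrix.one_mulVec]
    have hterm : ∀ t, (Wᵀ t) ⬝ᵥ E.mulVec (Wᵀ t) = ∑ i, cp i * A i t ^ 2 := by
      intro t
      rw [hcol t, Matrix.mulVec_mulVec, hEU, ← Matrix.mulVec_mulVec, hdot]
      simp only [dotProduct, Matrix.mulVec_diagonal]
      exact Finset.sum_congr rfl fun i _ => by ring
    rw [Finset.sum_congr rfl fun t _ => hterm t, Finset.sum_comm]
    have hrow : ∀ i : Fin d, ∑ t, cp i * A i t ^ 2 = s * Real.sqrt (∑ t, A i t ^ 2) := by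
      intro i
      rw [← Finset.mul_sum]
      by_cases h : Real.sqrt (∑ t, A i t ^ 2) = 0
      · have h0 : ∑ t, A i t ^ 2 = 0 := by rw [← hc2 i, h]; ring
        simp [hcp, h, h0]
      · simp only [hcp, h, if_false]
        rw [div_mul_eq_mul_div, div_eq_iff h, mul_assoc, Real.mul_self_sqrt (hnn i)]
    rw [Finset.sum_congr rfl fun i _ => hrow i, ← Finset.mul_sum]
    have : ∑ i, Real.sqrt (∑ t, A i t ^ 2) = s := rfl
    rw [this]
    ring
end

section
/- Suppose the L2,1-norm constraint ‖A‖_{2,1}² ≤ T/γ holds for A = [a_1,...,a_T] ∈ ℝ^{d×T} and ‖a_0‖₂² ≤ 1/β, and U ∈ ℝ^{d×d} is orthogonal. Then for any fixed vectors x_{ti} ∈ ℝ^d and i.i.d. Rademacher variables σ_{ti}, E_σ sup_{A,a_0,U} ∑_{t=1}^T ∑_{i=1}^{m_t} σ_{ti} ⟨U(a_t + a_0), x_{ti}⟩ ≤ (√(T/γ) + √(1/β)) · √(∑_{t=1}^T ∑_{i=1}^{m_t} ‖x_{ti}‖₂²), where the supremum is over all A, a_0, U satisfying the constraints. -/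
open Matrix

lemma rad_cross {ι : Type*} [Fintype ι] [DecidableEq ι] {k l : ι} (h : k ≠ l) :
    ∑ σ : ι → Bool, ((if σ k then (1:ℝ) else -1) * (if σ l then (1:ℝ) else -1)) = 0 := by
  have hinv : Function.Involutive (fun σ : ι → Bool => Function.update σ k (!σ k)) := by
    intro σ
    funext j
    by_cases hj : j = k
    · subst hj; simp
    · simp [Function.update_of_ne hj]
  set e := Function.Involutive.toPerm _ hinv with he
  have hsum := Equiv.sum_comp e
    (fun σ : ι → Bool => (if σ k then (1:ℝ) else -1) * (if σ l then (1:ℝ) else -1))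
  have hneg : ∀ σ : ι → Bool,
      ((if (e σ) k then (1:ℝ) else -1) * (if (e σ) l then (1:ℝ) else -1))
        = -((if σ k then (1:ℝ) else -1) * (if σ l then (1:ℝ) else -1)) := by
    intro σ
    have h1 : (e σ) k = !σ k := Function.update_self _ _ _
    have h2 : (e σ) l = σ l := Function.update_of_ne (Ne.symm h) _ _
    rw [h1, h2]
    cases σ k <;> cases σ l <;> norm_num
  rw [Finset.sum_congr rfl (fun σ _ => hneg σ), Finset.sum_neg_distrib] at hsum
  linarith

lemma rad_sq {ι : Type*} [Fintype ι] [DecidableEq ι] (c : ι → ℝ) :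
    ∑ σ : ι → Bool, (∑ k, (if σ k then (1:ℝ) else -1) * c k) ^ 2
      = 2 ^ Fintype.card ι * ∑ k, c k ^ 2 := by
  have expand : ∀ σ : ι → Bool, (∑ k, (if σ k then (1:ℝ) else -1) * c k) ^ 2
      = ∑ k, ∑ l, ((if σ k then (1:ℝ) else -1) * (if σ l then (1:ℝ) else -1)) * (c k * c l) := by
    intro σ
    rw [sq, Finset.sum_mul_sum]
    exact Finset.sum_congr rfl fun k _ => Finset.sum_congr rfl fun l _ => by ring
  calc ∑ σ : ι → Bool, (∑ k, (if σ k then (1:ℝ) else -1) * c k) ^ 2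
      = ∑ k, ∑ l, (∑ σ : ι → Bool,
          (if σ k then (1:ℝ) else -1) * (if σ l then (1:ℝ) else -1)) * (c k * c l) := by
        rw [Finset.sum_congr rfl fun σ _ => expand σ, Finset.sum_comm]
        refine Finset.sum_congr rfl fun k _ => ?_
        rw [Finset.sum_comm]
        exact Finset.sum_congr rfl fun l _ => (Finset.sum_mul _ _ _).symm
    _ = ∑ k, (2 ^ Fintype.card ι : ℝ) * c k ^ 2 := by
        refine Finset.sum_congr rfl fun k _ => ?_
        rw [Finset.sum_eq_single k]
        · have : ∑ σ : ι → Bool, (if σ k then (1:ℝ) else -1) * (if σ k then (1:ℝ) else -1)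
              = 2 ^ Fintype.card ι := by
            have h1 : ∀ σ : ι → Bool, (if σ k then (1:ℝ) else -1) * (if σ k then (1:ℝ) else -1) = 1 := by
              intro σ; cases σ k <;> norm_num
            rw [Finset.sum_congr rfl fun σ _ => h1 σ, Finset.sum_const, Finset.card_univ]
            simp [Fintype.card_fun]
          rw [this]; ring
        · intro l _ hl
          rw [rad_cross (Ne.symm hl)]; ring
        · intro h; exact absurd (Finset.mem_univ k) h
    _ = 2 ^ Fintype.card ι * ∑ k, c k ^ 2 := by rw [Finset.mul_sum]
lemma rad_sq_pi {T : ℕ} (m : Fin T → ℕ) (t : Fin T) (c : Fin (m t) → ℝ) :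
    ∑ s : (t' : Fin T) → Fin (m t') → Bool,
        (∑ i, (if s t i then (1:ℝ) else -1) * c i) ^ 2
      = 2 ^ (∑ t', m t') * ∑ i, c i ^ 2 := by
  classical
  let e := Equiv.piSplitAt t (fun t' => Fin (m t') → Bool)
  have h1 : ∑ s : (t' : Fin T) → Fin (m t') → Bool,
        (∑ i, (if s t i then (1:ℝ) else -1) * c i) ^ 2
      = ∑ p : (Fin (m t) → Bool) × ((t' : {j // j ≠ t}) → Fin (m t'.1) → Bool),
          (∑ i, (if p.1 i then (1:ℝ) else -1) * c i) ^ 2 :=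
    Fintype.sum_equiv e _ _ (fun s => rfl)
  rw [h1, Fintype.sum_prod_type]
  have hconst : ∀ b : Fin (m t) → Bool,
      ∑ _r : ((t' : {j // j ≠ t}) → Fin (m t'.1) → Bool),
        (∑ i, (if b i then (1:ℝ) else -1) * c i) ^ 2
      = (Fintype.card ((t' : {j // j ≠ t}) → Fin (m t'.1) → Bool) : ℝ)
          * (∑ i, (if b i then (1:ℝ) else -1) * c i) ^ 2 := fun b => by
    rw [Finset.sum_const, Finset.card_univ, nsmul_eq_mul]
  simp_rw [hconst]
  rw [← Finset.mul_sum]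
  have h2 := rad_sq c
  rw [Fintype.card_fin] at h2
  rw [h2]
  have hcard : (2 : ℕ) ^ (m t) * Fintype.card ((t' : {j // j ≠ t}) → Fin (m t'.1) → Bool)
      = 2 ^ (∑ t', m t') := by
    have hc1 : Fintype.card ((t' : Fin T) → Fin (m t') → Bool) = 2 ^ (∑ t', m t') := by
      rw [Fintype.card_pi]
      simp [Fintype.card_fun, Finset.prod_pow_eq_pow_sum]
    have hc2 : Fintype.card ((t' : Fin T) → Fin (m t') → Bool)
        = Fintype.card (Fin (m t) → Bool)
          * Fintype.card ((t' : {j // j ≠ t}) → Fin (m t'.1) → Bool) :=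
      (Fintype.card_congr e).trans (Fintype.card_prod _ _)
    rw [hc1] at hc2
    rw [hc2]
    congr 1
    simp [Fintype.card_fun]
  have hmul : (Fintype.card ((t' : {j // j ≠ t}) → Fin (m t'.1) → Bool) : ℝ) * 2 ^ (m t)
      = 2 ^ (∑ t', m t') := by
    rw [mul_comm]
    exact_mod_cast congrArg (Nat.cast : ℕ → ℝ) hcard
  rw [← mul_assoc, hmul]

lemma rad_sq_sigma {T : ℕ} (m : Fin T → ℕ) (c : (t : Fin T) → Fin (m t) → ℝ) :
    ∑ s : (t : Fin T) → Fin (m t) → Bool,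
        (∑ t, ∑ i, (if s t i then (1:ℝ) else -1) * c t i) ^ 2
      = 2 ^ (∑ t, m t) * ∑ t, ∑ i, c t i ^ 2 := by
  classical
  let e := Equiv.piCurry (fun (t : Fin T) (_ : Fin (m t)) => Bool)
  have h1 : ∑ s : (t : Fin T) → Fin (m t) → Bool,
        (∑ t, ∑ i, (if s t i then (1:ℝ) else -1) * c t i) ^ 2
      = ∑ σ : (Σ t : Fin T, Fin (m t)) → Bool,
        (∑ t, ∑ i, (if σ ⟨t, i⟩ then (1:ℝ) else -1) * c t i) ^ 2 :=
    (Equiv.sum_comp e _).symm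
  rw [h1]
  have h2 : ∀ σ : (Σ t : Fin T, Fin (m t)) → Bool,
      ∑ t, ∑ i, (if σ ⟨t, i⟩ then (1:ℝ) else -1) * c t i
        = ∑ p : Σ t : Fin T, Fin (m t), (if σ p then (1:ℝ) else -1) * c p.1 p.2 := by
    intro σ
    rw [← Finset.univ_sigma_univ, Finset.sum_sigma]
  simp_rw [h2]
  rw [rad_sq (fun p : Σ t : Fin T, Fin (m t) => c p.1 p.2)]
  have hcard : Fintype.card (Σ t : Fin T, Fin (m t)) = ∑ t, m t := by
    simp [Fintype.card_sigma]
  rw [hcard, ← Finset.univ_sigma_univ, Finset.sum_sigma]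

lemma orth_sum {d : ℕ} {U : Matrix (Fin d) (Fin d) ℝ} (hU : Uᵀ * U = 1) (v : Fin d → ℝ) :
    ∑ k, (∑ j, U j k * v j) ^ 2 = ∑ j, v j ^ 2 := by
  have hU' : U * Uᵀ = 1 := mul_eq_one_comm.mp hU
  have hent : ∀ j j', ∑ k, U j k * U j' k = if j = j' then (1:ℝ) else 0 := by
    intro j j'
    have := congrFun (congrFun hU' j) j'
    simpa [Matrix.mul_apply, Matrix.transpose_apply, Matrix.one_apply] using this
  calc ∑ k, (∑ j, U j k * v j) ^ 2
      = ∑ k, ∑ j, ∑ j', (U j k * v j) * (U j' k * v j') := by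
        refine Finset.sum_congr rfl fun k _ => ?_
        rw [sq, Finset.sum_mul_sum]
    _ = ∑ j, ∑ j', (v j * v j') * ∑ k, U j k * U j' k := by
        rw [Finset.sum_comm]
        refine Finset.sum_congr rfl fun j _ => ?_
        rw [Finset.sum_comm]
        refine Finset.sum_congr rfl fun j' _ => ?_
        rw [Finset.mul_sum]
        exact Finset.sum_congr rfl fun k _ => by ring
    _ = ∑ j, v j ^ 2 := by
        simp_rw [hent, mul_ite, mul_one, mul_zero, Finset.sum_ite_eq, Finset.mem_univ, if_true]
        exact Finset.sum_congr rfl fun j _ => (sq (v j)).symm ▸ rfl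

-- Cauchy–Schwarz helper: single-term domination by full sqrt
lemma sqrt_term_le {α : Type*} [Fintype α] (f : α → ℝ) (hf : ∀ a, 0 ≤ f a) (a : α) :
    Real.sqrt (f a) ≤ Real.sqrt (∑ b, f b) :=
  Real.sqrt_le_sqrt (Finset.single_le_sum (fun b _ => hf b) (Finset.mem_univ a))

lemma pointwise_bound {d T : ℕ} {γ β : ℝ}
    (A : Matrix (Fin d) (Fin T) ℝ) (a0 : Fin d → ℝ) (U : Matrix (Fin d) (Fin d) ℝ)
    (hA : l21 A ^ 2 ≤ (T : ℝ) / γ) (ha0 : (∑ j, a0 j ^ 2) ≤ 1 / β) (hU : Uᵀ * U = 1)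
    (y : Fin T → Fin d → ℝ) :
    ∑ t, ∑ j, (∑ k, U j k * (A k t + a0 k)) * y t j
      ≤ Real.sqrt ((T : ℝ) / γ) * Real.sqrt (∑ t, ∑ j, y t j ^ 2)
        + Real.sqrt (1 / β) * Real.sqrt (∑ j, (∑ t, y t j) ^ 2) := by
  classical
  -- split into the A part and the a0 part
  have hsplit : ∑ t, ∑ j, (∑ k, U j k * (A k t + a0 k)) * y t j
      = (∑ k, ∑ t, A k t * (∑ j, U j k * y t j))
        + (∑ k, a0 k * (∑ j, U j k * (∑ t, y t j))) := by
    calc ∑ t, ∑ j, (∑ k, U j k * (A k t + a0 k)) * y t j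
        = ∑ t, ∑ j, ∑ k, (U j k * A k t * y t j + U j k * a0 k * y t j) := by
          refine Finset.sum_congr rfl fun t _ => Finset.sum_congr rfl fun j _ => ?_
          rw [Finset.sum_mul]
          exact Finset.sum_congr rfl fun k _ => by ring
      _ = ∑ t, ∑ k, ∑ j, (U j k * A k t * y t j + U j k * a0 k * y t j) := by
          exact Finset.sum_congr rfl fun t _ => Finset.sum_comm
      _ = ∑ k, ∑ t, ∑ j, (U j k * A k t * y t j + U j k * a0 k * y t j) := Finset.sum_comm
      _ = ∑ k, ((∑ t, ∑ j, U j k * A k t * y t j) + (∑ t, ∑ j, U j k * a0 k * y t j)) := by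
          refine Finset.sum_congr rfl fun k _ => ?_
          rw [← Finset.sum_add_distrib]
          exact Finset.sum_congr rfl fun t _ => Finset.sum_add_distrib
      _ = (∑ k, ∑ t, A k t * (∑ j, U j k * y t j))
            + (∑ k, a0 k * (∑ j, U j k * (∑ t, y t j))) := by
          rw [← Finset.sum_add_distrib]
          refine Finset.sum_congr rfl fun k _ => ?_
          congr 1
          · refine Finset.sum_congr rfl fun t _ => ?_
            rw [Finset.mul_sum]
            exact Finset.sum_congr rfl fun j _ => by ring
          · rw [Finset.sum_comm, Finset.mul_sum]
            refine Finset.sum_congr rfl fun j _ => ?_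
            rw [Finset.mul_sum, Finset.mul_sum]
            exact Finset.sum_congr rfl fun t _ => by ring
  rw [hsplit]
  have hQ : 0 ≤ ∑ t, ∑ j, y t j ^ 2 := by positivity
  -- bound for the A part
  have hZ : ∑ k, ∑ t, (∑ j, U j k * y t j) ^ 2 = ∑ t, ∑ j, y t j ^ 2 := by
    rw [Finset.sum_comm]
    exact Finset.sum_congr rfl fun t _ => orth_sum hU (fun j => y t j)
  have hl21nn : 0 ≤ l21 A :=
    Finset.sum_nonneg fun i _ => Real.sqrt_nonneg _
  have hl21 : l21 A ≤ Real.sqrt ((T : ℝ) / γ) := by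
    have := Real.sqrt_le_sqrt hA
    rwa [Real.sqrt_sq hl21nn] at this
  have hbA : (∑ k, ∑ t, A k t * (∑ j, U j k * y t j))
      ≤ Real.sqrt ((T : ℝ) / γ) * Real.sqrt (∑ t, ∑ j, y t j ^ 2) := by
    have step1 : ∀ k, ∑ t, A k t * (∑ j, U j k * y t j)
        ≤ Real.sqrt (∑ t, A k t ^ 2) * Real.sqrt (∑ t, ∑ j, y t j ^ 2) := by
      intro k
      refine le_trans (Real.sum_mul_le_sqrt_mul_sqrt Finset.univ _ _) ?_
      refine mul_le_mul_of_nonneg_left ?_ (Real.sqrt_nonneg _)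
      rw [← hZ]
      exact Real.sqrt_le_sqrt
        (Finset.single_le_sum
          (f := fun k' => ∑ t, (∑ j, U j k' * y t j) ^ 2)
          (fun k' _ => Finset.sum_nonneg fun t _ => sq_nonneg _) (Finset.mem_univ k))
    calc (∑ k, ∑ t, A k t * (∑ j, U j k * y t j))
        ≤ ∑ k, Real.sqrt (∑ t, A k t ^ 2) * Real.sqrt (∑ t, ∑ j, y t j ^ 2) :=
          Finset.sum_le_sum fun k _ => step1 k
      _ = l21 A * Real.sqrt (∑ t, ∑ j, y t j ^ 2) := by
          rw [l21, Finset.sum_mul]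
      _ ≤ Real.sqrt ((T : ℝ) / γ) * Real.sqrt (∑ t, ∑ j, y t j ^ 2) :=
          mul_le_mul_of_nonneg_right hl21 (Real.sqrt_nonneg _)
  -- bound for the a0 part
  have hb0 : (∑ k, a0 k * (∑ j, U j k * (∑ t, y t j)))
      ≤ Real.sqrt (1 / β) * Real.sqrt (∑ j, (∑ t, y t j) ^ 2) := by
    refine le_trans (Real.sum_mul_le_sqrt_mul_sqrt Finset.univ _ _) ?_
    rw [orth_sum hU (fun j => ∑ t, y t j)]
    exact mul_le_mul_of_nonneg_right (Real.sqrt_le_sqrt ha0) (Real.sqrt_nonneg _)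
  exact add_le_add hbA hb0

lemma card_sign {T : ℕ} (m : Fin T → ℕ) :
    Fintype.card ((t : Fin T) → Fin (m t) → Bool) = 2 ^ (∑ t, m t) := by
  rw [Fintype.card_pi]
  simp [Fintype.card_fun, Finset.prod_pow_eq_pow_sum]

set_option maxHeartbeats 2000000 in
/-- under the constraints ‖A‖₂₁² ≤ T/γ, ‖a₀‖₂² ≤ 1/β, U orthogonal,
E_σ sup ∑_{t,i} σ_{ti} ⟨U(aₜ + a₀), x_{ti}⟩ ≤ (√(T/γ) + √(1/β)) √(∑_{t,i} ‖x_{ti}‖₂²).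
The expectation over the Rademacher signs is the average over all sign assignments. -/
theorem rademacher_sup_bound {d T : ℕ} (γ β : ℝ) (hγ : 0 < γ) (hβ : 0 < β)
    (m : Fin T → ℕ) (x : (t : Fin T) → Fin (m t) → Fin d → ℝ) :
    (∑ s : (t : Fin T) → Fin (m t) → Bool,
        sSup {v : ℝ |
          ∃ (A : Matrix (Fin d) (Fin T) ℝ) (a0 : Fin d → ℝ) (U : Matrix (Fin d) (Fin d) ℝ),
            l21 A ^ 2 ≤ (T : ℝ) / γ ∧ (∑ j, a0 j ^ 2) ≤ 1 / β ∧ Uᵀ * U = 1 ∧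
            v = ∑ t, ∑ i, (if s t i then (1 : ℝ) else -1) *
              (U.mulVec (fun j => A j t + a0 j) ⬝ᵥ x t i)}) / 2 ^ (∑ t, m t) ≤
      (Real.sqrt ((T : ℝ) / γ) + Real.sqrt (1 / β)) *
        Real.sqrt (∑ t, ∑ i, ∑ j, x t i j ^ 2) := by
  classical
  set X : ℝ := ∑ t, ∑ i, ∑ j, x t i j ^ 2 with hXdef
  have hXnn : 0 ≤ X := by positivity
  set C1 : ℝ := Real.sqrt ((T : ℝ) / γ) with hC1
  set C2 : ℝ := Real.sqrt (1 / β) with hC2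
  set Q : ((t : Fin T) → Fin (m t) → Bool) → ℝ := fun s =>
    ∑ t, ∑ j, (∑ i, (if s t i then (1 : ℝ) else -1) * x t i j) ^ 2 with hQdef
  set R : ((t : Fin T) → Fin (m t) → Bool) → ℝ := fun s =>
    ∑ j, (∑ t, ∑ i, (if s t i then (1 : ℝ) else -1) * x t i j) ^ 2 with hRdef
  have hQnn : ∀ s, 0 ≤ Q s := fun s =>
    Finset.sum_nonneg fun t _ => Finset.sum_nonneg fun j _ => sq_nonneg _
  have hRnn : ∀ s, 0 ≤ R s := fun s => Finset.sum_nonneg fun j _ => sq_nonneg _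
  -- pointwise bound on the sup
  have key : ∀ s : (t : Fin T) → Fin (m t) → Bool,
      sSup {v : ℝ |
          ∃ (A : Matrix (Fin d) (Fin T) ℝ) (a0 : Fin d → ℝ) (U : Matrix (Fin d) (Fin d) ℝ),
            l21 A ^ 2 ≤ (T : ℝ) / γ ∧ (∑ j, a0 j ^ 2) ≤ 1 / β ∧ Uᵀ * U = 1 ∧
            v = ∑ t, ∑ i, (if s t i then (1 : ℝ) else -1) *
              (U.mulVec (fun j => A j t + a0 j) ⬝ᵥ x t i)}
        ≤ C1 * Real.sqrt (Q s) + C2 * Real.sqrt (R s) := by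
    intro s
    apply Real.sSup_le
    · rintro v ⟨A, a0, U, hA, ha0, hU, rfl⟩
      have hv : ∑ t, ∑ i, (if s t i then (1 : ℝ) else -1) *
            (U.mulVec (fun j => A j t + a0 j) ⬝ᵥ x t i)
          = ∑ t, ∑ j, (∑ k, U j k * (A k t + a0 k)) *
              (∑ i, (if s t i then (1 : ℝ) else -1) * x t i j) := by
        refine Finset.sum_congr rfl fun t _ => ?_
        calc ∑ i, (if s t i then (1 : ℝ) else -1) *
              (U.mulVec (fun j => A j t + a0 j) ⬝ᵥ x t i)
            = ∑ i, ∑ j, (∑ k, U j k * (A k t + a0 k)) *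
                ((if s t i then (1 : ℝ) else -1) * x t i j) := by
              refine Finset.sum_congr rfl fun i _ => ?_
              simp only [Matrix.mulVec, dotProduct]
              rw [Finset.mul_sum]
              exact Finset.sum_congr rfl fun j _ => by ring
          _ = ∑ j, ∑ i, (∑ k, U j k * (A k t + a0 k)) *
                ((if s t i then (1 : ℝ) else -1) * x t i j) := Finset.sum_comm
          _ = ∑ j, (∑ k, U j k * (A k t + a0 k)) *
                (∑ i, (if s t i then (1 : ℝ) else -1) * x t i j) := by
              exact Finset.sum_congr rfl fun j _ => (Finset.mul_sum _ _ _).symm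
      rw [hv]
      exact pointwise_bound A a0 U hA ha0 hU
        (fun t j => ∑ i, (if s t i then (1 : ℝ) else -1) * x t i j)
    · have : 0 ≤ C1 := Real.sqrt_nonneg _
      have : 0 ≤ C2 := Real.sqrt_nonneg _
      positivity
  -- expectations of Q and R
  have hQsum : ∑ s, Q s = 2 ^ (∑ t, m t) * X := by
    calc ∑ s, Q s
        = ∑ t, ∑ j, ∑ s : (t : Fin T) → Fin (m t) → Bool,
            (∑ i, (if s t i then (1 : ℝ) else -1) * x t i j) ^ 2 := by
          rw [hQdef, Finset.sum_comm]
          exact Finset.sum_congr rfl fun t _ => Finset.sum_comm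
      _ = ∑ t, ∑ j, (2 : ℝ) ^ (∑ t', m t') * ∑ i, x t i j ^ 2 := by
          exact Finset.sum_congr rfl fun t _ => Finset.sum_congr rfl fun j _ =>
            rad_sq_pi m t (fun i => x t i j)
      _ = 2 ^ (∑ t, m t) * X := by
          rw [hXdef, Finset.mul_sum]
          refine Finset.sum_congr rfl fun t _ => ?_
          rw [← Finset.mul_sum]
          congr 1
          exact Finset.sum_comm
  have hRsum : ∑ s, R s = 2 ^ (∑ t, m t) * X := by
    calc ∑ s, R s
        = ∑ j, ∑ s : (t : Fin T) → Fin (m t) → Bool,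
            (∑ t, ∑ i, (if s t i then (1 : ℝ) else -1) * x t i j) ^ 2 := by
          rw [hRdef, Finset.sum_comm]
      _ = ∑ j, (2 : ℝ) ^ (∑ t, m t) * ∑ t, ∑ i, x t i j ^ 2 := by
          exact Finset.sum_congr rfl fun j _ => rad_sq_sigma m (fun t i => x t i j)
      _ = 2 ^ (∑ t, m t) * X := by
          rw [hXdef, ← Finset.mul_sum]
          congr 1
          rw [Finset.sum_comm]
          refine Finset.sum_congr rfl fun t _ => Finset.sum_comm
  -- averaging the square roots
  have hcard : ((Finset.univ : Finset ((t : Fin T) → Fin (m t) → Bool)).card : ℝ)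
      = 2 ^ (∑ t, m t) := by
    rw [Finset.card_univ, card_sign m]
    push_cast
    ring
  have havg : ∀ (F : ((t : Fin T) → Fin (m t) → Bool) → ℝ), (∀ s, 0 ≤ F s) →
      (∑ s, F s = 2 ^ (∑ t, m t) * X) →
      ∑ s, Real.sqrt (F s) ≤ 2 ^ (∑ t, m t) * Real.sqrt X := by
    intro F hFnn hFsum
    have h1 : ∑ s, Real.sqrt (F s) = ∑ s, 1 * Real.sqrt (F s) := by simp
    have h2 := Real.sum_mul_le_sqrt_mul_sqrt Finset.univ
      (fun _ : (t : Fin T) → Fin (m t) → Bool => (1 : ℝ)) (fun s => Real.sqrt (F s))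
    have h3 : ∑ s : (t : Fin T) → Fin (m t) → Bool, (1 : ℝ) ^ 2 = 2 ^ (∑ t, m t) := by
      simp only [one_pow, Finset.sum_const, Finset.card_univ, nsmul_eq_mul, mul_one]
      rw [card_sign m]
      push_cast
      ring
    have h4 : ∑ s, Real.sqrt (F s) ^ 2 = 2 ^ (∑ t, m t) * X := by
      rw [← hFsum]
      exact Finset.sum_congr rfl fun s _ => Real.sq_sqrt (hFnn s)
    rw [h3, h4] at h2
    rw [h1]
    refine le_trans h2 ?_
    rw [Real.sqrt_mul (by positivity) X, ← mul_assoc, ← Real.sqrt_mul (by positivity)]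
    rw [Real.sqrt_mul_self (by positivity)]
  have hQavg := havg Q hQnn hQsum
  have hRavg := havg R hRnn hRsum
  -- final assembly
  have hpow : (0 : ℝ) < 2 ^ (∑ t, m t) := by positivity
  rw [div_le_iff₀ hpow]
  calc (∑ s : (t : Fin T) → Fin (m t) → Bool,
        sSup {v : ℝ |
          ∃ (A : Matrix (Fin d) (Fin T) ℝ) (a0 : Fin d → ℝ) (U : Matrix (Fin d) (Fin d) ℝ),
            l21 A ^ 2 ≤ (T : ℝ) / γ ∧ (∑ j, a0 j ^ 2) ≤ 1 / β ∧ Uᵀ * U = 1 ∧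
            v = ∑ t, ∑ i, (if s t i then (1 : ℝ) else -1) *
              (U.mulVec (fun j => A j t + a0 j) ⬝ᵥ x t i)})
      ≤ ∑ s, (C1 * Real.sqrt (Q s) + C2 * Real.sqrt (R s)) :=
        Finset.sum_le_sum fun s _ => key s
    _ = C1 * (∑ s, Real.sqrt (Q s)) + C2 * (∑ s, Real.sqrt (R s)) := by
        rw [Finset.sum_add_distrib, Finset.mul_sum, Finset.mul_sum]
    _ ≤ C1 * (2 ^ (∑ t, m t) * Real.sqrt X) + C2 * (2 ^ (∑ t, m t) * Real.sqrt X) :=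
        add_le_add
          (mul_le_mul_of_nonneg_left hQavg (Real.sqrt_nonneg _))
          (mul_le_mul_of_nonneg_left hRavg (Real.sqrt_nonneg _))
    _ = (C1 + C2) * Real.sqrt X * 2 ^ (∑ t, m t) := by ring
end

section
/- Optimal value correspondence: For any A ∈ ℝ^{d×T}, a_0 ∈ ℝ^d, and orthogonal U ∈ ℝ^{d×d}, setting W = UA, w_0 = U a_0, and D = U Diag(‖a^i‖₂/‖A‖_{2,1})_{i=1}^d Uᵀ (assuming A ≠ 0), the objective ∑_{t,i} l(y_{ti}, ⟨a_t + a_0, Uᵀ x_{ti}⟩) + (γ/T)‖A‖_{2,1}² + β‖a_0‖₂² equals ∑_{t,i} l(y_{ti}, ⟨w_t + w_0, x_{ti}⟩) + (γ/T)∑_{t=1}^T ⟨w_t, D⁺ w_t⟩ + β⟨w_0, w_0⟩, and D satisfies trace(D) = 1, D positive semidefinite, and range(W) ⊆ range(D). -/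
open Matrix

/-- Uniqueness of the Moore–Penrose pseudoinverse. -/
lemma mp_unique_s15 {d : ℕ} {D B C : Matrix (Fin d) (Fin d) ℝ}
    (hB : IsMoorePenrose D B) (hC : IsMoorePenrose D C) : B = C := by
  obtain ⟨hB1, hB2, hB3, hB4⟩ := hB
  obtain ⟨hC1, hC2, hC3, hC4⟩ := hC
  have h1 : B * D = C * D := by
    calc B * D = (B * D)ᵀ := hB4.symm
      _ = Dᵀ * Bᵀ := by rw [transpose_mul]
      _ = (D * C * D)ᵀ * Bᵀ := by rw [hC1]
      _ = (Dᵀ * Cᵀ) * (Dᵀ * Bᵀ) := by simp [transpose_mul, Matrix.mul_assoc]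
      _ = (C * D)ᵀ * (B * D)ᵀ := by rw [transpose_mul, transpose_mul]
      _ = (C * D) * (B * D) := by rw [hC4, hB4]
      _ = C * (D * B * D) := by simp [Matrix.mul_assoc]
      _ = C * D := by rw [hB1]
  have h2 : D * B = D * C := by
    calc D * B = (D * B)ᵀ := hB3.symm
      _ = Bᵀ * Dᵀ := by rw [transpose_mul]
      _ = Bᵀ * (D * C * D)ᵀ := by rw [hC1]
      _ = (Bᵀ * Dᵀ) * (Cᵀ * Dᵀ) := by simp [transpose_mul, Matrix.mul_assoc]
      _ = (D * B)ᵀ * (D * C)ᵀ := by rw [transpose_mul, transpose_mul]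
      _ = (D * B) * (D * C) := by rw [hB3, hC3]
      _ = (D * B * D) * C := by simp [Matrix.mul_assoc]
      _ = D * C := by rw [hB1]
  calc B = B * D * B := hB2.symm
    _ = B * (D * C) := by rw [Matrix.mul_assoc, h2]
    _ = C * D * C := by rw [← Matrix.mul_assoc, h1]
    _ = C := hC2

/-- optimal value correspondence. With W = UA, w₀ = Ua₀ and
D = U·Diag(‖aⁱ‖₂/‖A‖₂₁)·Uᵀ, the objective in (A, a₀, U) equals the objective in
(W, w₀, D), and D is PSD with trace 1 and range(W) ⊆ range(D). -/
theorem optimal_value_correspondence {d T : ℕ} (γ β : ℝ) (hγ : 0 < γ) (hβ : 0 < β)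
    (l : ℝ → ℝ → ℝ) (m : Fin T → ℕ)
    (x : (t : Fin T) → Fin (m t) → Fin d → ℝ) (y : (t : Fin T) → Fin (m t) → ℝ)
    (A : Matrix (Fin d) (Fin T) ℝ) (hA : A ≠ 0) (a0 : Fin d → ℝ)
    (U : Matrix (Fin d) (Fin d) ℝ) (hU : Uᵀ * U = 1)
    (W : Matrix (Fin d) (Fin T) ℝ) (hW : W = U * A)
    (w0 : Fin d → ℝ) (hw0 : w0 = U.mulVec a0)
    (D : Matrix (Fin d) (Fin d) ℝ)
    (hD : D = U * Matrix.diagonal (fun i => Real.sqrt (∑ t, A i t ^ 2) / l21 A) * Uᵀ)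
    (Dp : Matrix (Fin d) (Fin d) ℝ) (hDp : IsMoorePenrose D Dp) :
    ((∑ t, ∑ i, l (y t i) ((fun j => A j t + a0 j) ⬝ᵥ Uᵀ.mulVec (x t i))) +
        (γ / (T : ℝ)) * l21 A ^ 2 + β * (∑ j, a0 j ^ 2) =
      (∑ t, ∑ i, l (y t i) ((fun j => W j t + w0 j) ⬝ᵥ x t i)) +
        (γ / (T : ℝ)) * (∑ t, (Wᵀ t) ⬝ᵥ Dp.mulVec (Wᵀ t)) + β * (w0 ⬝ᵥ w0)) ∧
      D.trace = 1 ∧ D.PosSemidef ∧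
      ∀ v ∈ Set.range W.mulVec, v ∈ Set.range D.mulVec := by
  classical
  set n : Fin d → ℝ := fun i => Real.sqrt (∑ t, A i t ^ 2) with hn
  set s : ℝ := l21 A with hsdef
  have hn0 : ∀ i, 0 ≤ n i := fun i => Real.sqrt_nonneg _
  have hnsq : ∀ i, n i ^ 2 = ∑ t, A i t ^ 2 := fun i =>
    Real.sq_sqrt (Finset.sum_nonneg fun t _ => sq_nonneg _)
  have hrow : ∀ i, n i = 0 → ∀ t, A i t = 0 := by
    intro i hi t
    have h0 : ∑ t, A i t ^ 2 = 0 := by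
      have := hnsq i; rw [hi] at this; simpa using this.symm
    have := (Finset.sum_eq_zero_iff_of_nonneg (fun t _ => sq_nonneg (A i t))).mp h0 t
      (Finset.mem_univ t)
    exact pow_eq_zero_iff (by norm_num) |>.mp this
  have hs : 0 < s := by
    have : ∃ i t, A i t ≠ 0 := by
      by_contra h
      push_neg at h
      exact hA (by ext i t; simpa using h i t)
    obtain ⟨i, t, hit⟩ := this
    have hni : 0 < n i := by
      rcases (hn0 i).lt_or_eq with h | h
      · exact h
      · exact absurd (hrow i h.symm t) hit
    exact Finset.sum_pos' (fun j _ => hn0 j) ⟨i, Finset.mem_univ i, hni⟩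
  have hUU : U * Uᵀ = 1 := mul_eq_one_comm.mp hU
  set σ : Fin d → ℝ := fun i => n i / s with hσ
  set σp : Fin d → ℝ := fun i => if n i = 0 then 0 else s / n i with hσp
  -- products of conjugated diagonals
  have hconj : ∀ v w : Fin d → ℝ,
      (U * diagonal v * Uᵀ) * (U * diagonal w * Uᵀ)
        = U * diagonal (fun i => v i * w i) * Uᵀ := by
    intro v w
    calc (U * diagonal v * Uᵀ) * (U * diagonal w * Uᵀ)
        = U * diagonal v * (Uᵀ * U) * diagonal w * Uᵀ := by
          simp only [Matrix.mul_assoc]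
      _ = U * (diagonal v * diagonal w) * Uᵀ := by
          rw [hU]; simp only [Matrix.mul_one, Matrix.mul_assoc]
      _ = U * diagonal (fun i => v i * w i) * Uᵀ := by
          rw [diagonal_mul_diagonal]
  have hsym : ∀ v : Fin d → ℝ, (U * diagonal v * Uᵀ)ᵀ = U * diagonal v * Uᵀ := by
    intro v
    simp [transpose_mul, diagonal_transpose, Matrix.mul_assoc]
  have hDσ : D = U * diagonal σ * Uᵀ := hD
  -- candidate pseudoinverse
  have hσσpσ : ∀ i, σ i * σp i * σ i = σ i := by
    intro i
    by_cases h : n i = 0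
    · simp [hσ, hσp, h]
    · simp only [hσ, hσp, if_neg h]
      field_simp
  have hσpσσp : ∀ i, σp i * σ i * σp i = σp i := by
    intro i
    by_cases h : n i = 0
    · simp [hσ, hσp, h]
    · simp only [hσ, hσp, if_neg h]
      field_simp
  have hMPq : IsMoorePenrose D (U * diagonal σp * Uᵀ) := by
    refine ⟨?_, ?_, ?_, ?_⟩
    · rw [hDσ, hconj, hconj]
      simp only [hσσpσ]
    · rw [hDσ, hconj, hconj]
      simp only [hσpσσp]
    · rw [hDσ, hconj]; exact hsym _
    · rw [hDσ, hconj]; exact hsym _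
  have hDpEq : Dp = U * diagonal σp * Uᵀ := mp_unique_s15 hDp hMPq
  -- inner product preservation
  have hinner : ∀ v w : Fin d → ℝ, U.mulVec v ⬝ᵥ U.mulVec w = v ⬝ᵥ w := by
    intro v w
    rw [Matrix.dotProduct_mulVec, ← Matrix.mulVec_transpose, Matrix.mulVec_mulVec, hU,
      Matrix.one_mulVec]
  -- columns of W
  have hWcol : ∀ t, (Wᵀ t) = U.mulVec (fun k => A k t) := by
    intro t
    ext j
    rw [hW]
    simp [Matrix.mul_apply, Matrix.mulVec, dotProduct]
  refine ⟨?_, ?_, ?_, ?_⟩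
  · -- objective values agree
    have hloss : ∀ (t : Fin T) (i : Fin (m t)),
        (fun j => A j t + a0 j) ⬝ᵥ Uᵀ.mulVec (x t i)
          = (fun j => W j t + w0 j) ⬝ᵥ x t i := by
      intro t i
      have hv : U.mulVec (fun j => A j t + a0 j) = fun j => W j t + w0 j := by
        ext j
        rw [hW, hw0]
        simp [Matrix.mulVec, dotProduct, Matrix.mul_apply, mul_add, Finset.sum_add_distrib]
      rw [Matrix.dotProduct_mulVec, ← Matrix.mulVec_transpose, transpose_transpose, hv]
    have hreg : ∑ t, (Wᵀ t) ⬝ᵥ Dp.mulVec (Wᵀ t) = s ^ 2 := by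
      have hterm : ∀ t, (Wᵀ t) ⬝ᵥ Dp.mulVec (Wᵀ t) = ∑ k, σp k * A k t ^ 2 := by
        intro t
        rw [hWcol, hDpEq]
        have hcut : (U * diagonal σp * Uᵀ) * U = U * diagonal σp := by
          rw [Matrix.mul_assoc, hU, Matrix.mul_one]
        have hdg : diagonal σp *ᵥ (fun k => A k t) = fun k => σp k * A k t := by
          ext k; rw [Matrix.mulVec_diagonal]
        have : (U * diagonal σp * Uᵀ).mulVec (U.mulVec (fun k => A k t))
            = U.mulVec (fun k => σp k * A k t) := by
          rw [Matrix.mulVec_mulVec, hcut, ← Matrix.mulVec_mulVec, hdg]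
        rw [this, hinner]
        simp only [dotProduct]
        exact Finset.sum_congr rfl fun k _ => by ring
      rw [Finset.sum_congr rfl fun t _ => hterm t, Finset.sum_comm]
      have : ∀ k, ∑ t, σp k * A k t ^ 2 = s * n k := by
        intro k
        rw [← Finset.mul_sum, ← hnsq]
        by_cases h : n k = 0
        · simp [hσp, h]
        · simp only [hσp, if_neg h, sq]
          field_simp
      rw [Finset.sum_congr rfl fun k _ => this k, ← Finset.mul_sum]
      have : ∑ k, n k = s := rfl
      rw [this, sq]
    have hb : w0 ⬝ᵥ w0 = ∑ j, a0 j ^ 2 := by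
      rw [hw0, hinner]
      simp [dotProduct, sq]
    rw [hreg, hb]
    congr 1
    congr 1
    exact Finset.sum_congr rfl fun t _ => Finset.sum_congr rfl fun i _ => by rw [hloss]
  · -- trace
    rw [hDσ, Matrix.trace_mul_comm, ← Matrix.mul_assoc, hU, Matrix.one_mul,
      Matrix.trace_diagonal]
    have : ∑ i, σ i = (∑ i, n i) / s := by
      rw [Finset.sum_div]
    rw [this]
    have hss : ∑ i, n i = s := rfl
    rw [hss, div_self hs.ne']
  · -- PSD
    rw [hDσ]
    have hdiag : (diagonal σ).PosSemidef :=
      Matrix.posSemidef_diagonal_iff.mpr fun i => div_nonneg (hn0 i) hs.le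
    have := hdiag.mul_mul_conjTranspose_same U
    simpa using this
  · -- range
    rintro v ⟨u, rfl⟩
    set c : Fin d → ℝ := fun j => if n j = 0 then 0 else (A.mulVec u j) * s / n j with hc
    refine ⟨U.mulVec c, ?_⟩
    have hσc : ∀ j, σ j * c j = A.mulVec u j := by
      intro j
      by_cases h : n j = 0
      · simp only [hc, hσ, h, if_pos, zero_div, zero_mul, if_true]
        have : A.mulVec u j = 0 := by
          simp [Matrix.mulVec, dotProduct, fun t => hrow j h t]
        rw [this]
      · simp only [hc, hσ, if_neg h]
        field_simp
    have hdg : diagonal σ *ᵥ c = A *ᵥ u := by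
      ext j; rw [Matrix.mulVec_diagonal]; exact hσc j
    have hcut : (U * diagonal σ * Uᵀ) * U = U * diagonal σ := by
      rw [Matrix.mul_assoc, hU, Matrix.mul_one]
    rw [hDσ, Matrix.mulVec_mulVec, hcut, ← Matrix.mulVec_mulVec, hdg, hW,
      ← Matrix.mulVec_mulVec]
end
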